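/- Let w : ℝ → ℝ be differentiable on (0, ∞) with w t > 0 for all t > 0. Assume: (i) for every t > 0, the functions r ↦ r⁻⁴ · w r and r ↦ r⁻² · (deriv w r)² / (w r) are Lebesgue integrable on (t, ∞); (ii) r⁻³ · w r → 0 as r → ∞; and (iii) for every t > 0, t⁻² · deriv w t ≤ −2·t⁻³ · w t + 6 · ∫_{(t,∞)} r⁻⁴ · w r dr − (3/4) · ∫_{(t,∞)} r⁻² · (deriv w r)² / (w r) dr + 4π/t. Then for every t > 0, deriv w t / t − w t / t² − 4π ≤ 0; equivalently, the derivative of t ↦ w(t)/t − 4πt is nonpositive on (0, ∞). -/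

import Mathlib

open MeasureTheory Filter Real

theorem monotonicity_from_integro_differential_inequality
    (w : ℝ → ℝ)
    (hw : DifferentiableOn ℝ w (Set.Ioi 0))
    (hpos : ∀ t > (0 : ℝ), 0 < w t)
    (hint1 : ∀ t > (0 : ℝ),
      IntegrableOn (fun r : ℝ => (r ^ 4)⁻¹ * w r) (Set.Ioi t))
    (hint2 : ∀ t > (0 : ℝ),
      IntegrableOn (fun r : ℝ => (r ^ 2)⁻¹ * (deriv w r) ^ 2 / w r) (Set.Ioi t))
    (hdecay : Tendsto (fun r : ℝ => (r ^ 3)⁻¹ * w r) atTop (nhds 0))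
    (hineq : ∀ t > (0 : ℝ),
      (t ^ 2)⁻¹ * deriv w t ≤
        -2 * (t ^ 3)⁻¹ * w t + 6 * (∫ r in Set.Ioi t, (r ^ 4)⁻¹ * w r)
          - (3 / 4) * (∫ r in Set.Ioi t, (r ^ 2)⁻¹ * (deriv w r) ^ 2 / w r)
          + 4 * π / t) :
    ∀ t > (0 : ℝ), deriv w t / t - w t / t ^ 2 - 4 * π ≤ 0 := by
  intro t ht
  have hwd : ∀ r > (0 : ℝ), HasDerivAt w (deriv w r) r := fun r hr =>
    (hw.differentiableAt (Ioi_mem_nhds hr)).hasDerivAt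
  set g : ℝ → ℝ := fun r => (r ^ 3)⁻¹ * w r with hgdef
  set f' : ℝ → ℝ := fun r => -3 * ((r ^ 4)⁻¹ * w r) + (r ^ 3)⁻¹ * deriv w r with hf'def
  have hgd : ∀ r > (0 : ℝ), HasDerivAt g (f' r) r := by
    intro r hr
    have h1 : HasDerivAt (fun r : ℝ => (r ^ 3)⁻¹)
        (-(3 * r ^ 2) / (r ^ 3) ^ 2) r := by
      simpa [Pi.inv_def] using (hasDerivAt_pow 3 r).inv (pow_ne_zero 3 hr.ne')
    have h2 := h1.mul (hwd r hr)
    have h3 : -(3 * r ^ 2) / (r ^ 3) ^ 2 = -3 * (r ^ 4)⁻¹ := by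
      rw [div_eq_iff (by positivity : ((r:ℝ) ^ 3) ^ 2 ≠ 0),
        show ((r:ℝ) ^ 3) ^ 2 = r ^ 4 * r ^ 2 by ring, ← mul_assoc,
        mul_assoc (-3 : ℝ) _ _, inv_mul_cancel₀ (by positivity : (r:ℝ) ^ 4 ≠ 0)]
      ring
    have h4 : f' r = -(3 * r ^ 2) / (r ^ 3) ^ 2 * w r + (r ^ 3)⁻¹ * deriv w r := by
      rw [h3, hf'def, mul_assoc]
    rw [hgdef]
    exact h4 ▸ h2
  -- integrability of (r^3)⁻¹ * deriv w r on Ioi t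
  have hboundpt : ∀ r ∈ Set.Ioi t,
      ‖(r ^ 3)⁻¹ * deriv w r‖ ≤
        (1 / 2) * ((r ^ 2)⁻¹ * (deriv w r) ^ 2 / w r + (r ^ 4)⁻¹ * w r) := by
    intro r hr
    have hr0 : (0 : ℝ) < r := ht.trans hr
    have hW : 0 < w r := hpos r hr0
    set X := deriv w r
    have habs : ‖(r ^ 3)⁻¹ * X‖ = (r ^ 3)⁻¹ * |X| := by
      rw [Real.norm_eq_abs, abs_mul, abs_of_nonneg (by positivity : (0:ℝ) ≤ (r ^ 3)⁻¹)]
    rw [habs, ← sq_abs X]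
    set Y := |X| with hY
    have hkey : (1 / 2) * ((r ^ 2)⁻¹ * Y ^ 2 / w r + (r ^ 4)⁻¹ * w r)
        - (r ^ 3)⁻¹ * Y = (r * Y - w r) ^ 2 / (2 * r ^ 4 * w r) := by
      field_simp
      ring
    nlinarith [div_nonneg (sq_nonneg (r * Y - w r)) (by positivity : (0:ℝ) ≤ 2 * r ^ 4 * w r), hkey]
  have hC : IntegrableOn (fun r : ℝ => (r ^ 3)⁻¹ * deriv w r) (Set.Ioi t) := by
    have hb : Integrable
        (fun r : ℝ => (1 / 2) * ((r ^ 2)⁻¹ * (deriv w r) ^ 2 / w r + (r ^ 4)⁻¹ * w r))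
        (volume.restrict (Set.Ioi t)) := by
      have h := ((hint2 t ht).add (hint1 t ht)).const_mul (1 / 2)
      refine h.congr (ae_of_all _ fun x => ?_)
      simp
    exact Integrable.mono' hb
      ((measurable_id.pow_const 3).inv.mul (measurable_deriv w)).aestronglyMeasurable
      ((ae_restrict_iff' measurableSet_Ioi).2 (ae_of_all _ fun r hr => hboundpt r hr))
  have hf'int : IntegrableOn f' (Set.Ioi t) := by
    exact ((hint1 t ht).const_mul (-3)).add hC
  -- FTC on Ioi t
  have hftc : ∫ r in Set.Ioi t, f' r = 0 - g t := by
    refine integral_Ioi_of_hasDerivAt_of_tendsto' (fun x hx => hgd x (lt_of_lt_of_le ht hx))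
      hf'int hdecay
  -- pointwise main inequality
  have hpt : ∀ r ∈ Set.Ioi t,
      6 * ((r ^ 4)⁻¹ * w r) - (3 / 4) * ((r ^ 2)⁻¹ * (deriv w r) ^ 2 / w r)
        ≤ -3 * f' r := by
    intro r hr
    have hr0 : (0 : ℝ) < r := ht.trans hr
    have hW : 0 < w r := hpos r hr0
    set X := deriv w r
    have hkey : -3 * f' r - (6 * ((r ^ 4)⁻¹ * w r) - (3 / 4) * ((r ^ 2)⁻¹ * X ^ 2 / w r))
        = (3 * (r * X - 2 * w r) ^ 2) / (4 * r ^ 4 * w r) := by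
      simp only [hf'def]
      field_simp
      ring
    nlinarith [div_nonneg (by positivity : (0:ℝ) ≤ 3 * (r * X - 2 * w r) ^ 2)
      (by positivity : (0:ℝ) ≤ 4 * r ^ 4 * w r), hkey]
  -- compare integrals
  have hLint : IntegrableOn (fun r : ℝ =>
      6 * ((r ^ 4)⁻¹ * w r) - (3 / 4) * ((r ^ 2)⁻¹ * (deriv w r) ^ 2 / w r)) (Set.Ioi t) :=
    ((hint1 t ht).const_mul 6).sub ((hint2 t ht).const_mul (3 / 4))
  have hmono : ∫ r in Set.Ioi t,
      (6 * ((r ^ 4)⁻¹ * w r) - (3 / 4) * ((r ^ 2)⁻¹ * (deriv w r) ^ 2 / w r))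
      ≤ ∫ r in Set.Ioi t, -3 * f' r :=
    setIntegral_mono_on hLint (hf'int.const_mul (-3)) measurableSet_Ioi hpt
  have hsplit : ∫ r in Set.Ioi t,
      (6 * ((r ^ 4)⁻¹ * w r) - (3 / 4) * ((r ^ 2)⁻¹ * (deriv w r) ^ 2 / w r))
      = 6 * (∫ r in Set.Ioi t, (r ^ 4)⁻¹ * w r)
        - (3 / 4) * (∫ r in Set.Ioi t, (r ^ 2)⁻¹ * (deriv w r) ^ 2 / w r) := by
    rw [integral_sub ((hint1 t ht).const_mul 6) ((hint2 t ht).const_mul (3 / 4)),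
      integral_const_mul, integral_const_mul]
  have hrhs : ∫ r in Set.Ioi t, -3 * f' r = 3 * g t := by
    rw [integral_const_mul, hftc]; ring
  have hbound : 6 * (∫ r in Set.Ioi t, (r ^ 4)⁻¹ * w r)
      - (3 / 4) * (∫ r in Set.Ioi t, (r ^ 2)⁻¹ * (deriv w r) ^ 2 / w r)
      ≤ 3 * ((t ^ 3)⁻¹ * w t) := by
    rw [← hsplit]
    calc _ ≤ ∫ r in Set.Ioi t, -3 * f' r := hmono
      _ = 3 * g t := hrhs
      _ = 3 * ((t ^ 3)⁻¹ * w t) := rfl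
  have h1 : (t ^ 2)⁻¹ * deriv w t ≤ (t ^ 3)⁻¹ * w t + 4 * π / t := by
    have := hineq t ht
    linarith
  have hEq : deriv w t / t - w t / t ^ 2 - 4 * π
      = t * ((t ^ 2)⁻¹ * deriv w t - ((t ^ 3)⁻¹ * w t + 4 * π / t)) := by
    have ht0 : t ≠ 0 := ht.ne'
    field_simp
    ring
  rw [hEq]
  have : (t ^ 2)⁻¹ * deriv w t - ((t ^ 3)⁻¹ * w t + 4 * π / t) ≤ 0 := by linarith
  exact mul_nonpos_of_nonneg_of_nonpos ht.le this
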